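/- arXiv:1406.2798 — 2 statements merged into one kernel-verified Lean document; each statement's English description precedes it below -/
import Mathlib

section
/- Let (Ω, ℱ, P) be a probability space, let 𝒢 and ℋ be sub-σ-algebras of ℱ, let ε > 0 and let D ∈ ℋ. Suppose that for every E ∈ 𝒢 and every A ∈ ℋ with A ⊆ D and P(A) > 0 one has |P(E|A) − P(E)| < ε. Then β(𝒢, ℋ) ≤ ε·P(D) + P(Dᶜ). -/
open MeasureTheory

lemma aux_biUnion {Ω : Type*} [F : MeasurableSpace Ω] (P : Measure Ω) [IsProbabilityMeasure P]
    {ι : Type*} (t : Finset ι) (f : ι → Set Ω)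
    (hf : ∀ i, MeasurableSet (f i)) (hdis : Pairwise (Function.onFun Disjoint f)) :
    (P (⋃ i ∈ t, f i)).toReal = ∑ i ∈ t, (P (f i)).toReal := by
  rw [measure_biUnion_finset (fun i _ j _ hij => hdis hij) (fun i _ => hf i)]
  exact ENNReal.toReal_sum (fun a _ => measure_ne_top P _)

lemma aux_partsum {Ω : Type*} [F : MeasurableSpace Ω] (P : Measure Ω) [IsProbabilityMeasure P]
    {n : ℕ} (f : Fin n → Set Ω) (hf : ∀ i, MeasurableSet (f i))
    (hdis : Pairwise (Function.onFun Disjoint f)) (hcov : (⋃ i, f i) = Set.univ)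
    (X : Set Ω) (hX : MeasurableSet X) : ∑ i, (P (f i ∩ X)).toReal = (P X).toReal := by
  have h1 : (⋃ i ∈ (Finset.univ : Finset (Fin n)), f i ∩ X) = X := by
    simp only [Finset.mem_univ, Set.iUnion_true]
    rw [← Set.iUnion_inter, hcov, Set.univ_inter]
  have h2 := aux_biUnion P Finset.univ (fun i => f i ∩ X)
    (fun i => (hf i).inter hX)
    (fun i j hij => (hdis hij).mono Set.inter_subset_left Set.inter_subset_left)
  rw [h1] at h2
  rw [← h2]

lemma aux_key {Ω : Type*} [F : MeasurableSpace Ω] (P : Measure Ω) [IsProbabilityMeasure P]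
    (G H : MeasurableSpace Ω) (ε : ℝ) (D : Set Ω)
    (h : ∀ E A : Set Ω, MeasurableSet[G] E → MeasurableSet[H] A → A ⊆ D → 0 < P A →
      |(P (E ∩ A)).toReal / (P A).toReal - (P E).toReal| < ε)
    (E A : Set Ω) (hE : MeasurableSet[G] E) (hA : MeasurableSet[H] A) (hAD : A ⊆ D) :
    |(P (E ∩ A)).toReal - (P E).toReal * (P A).toReal| ≤ ε * (P A).toReal := by
  rcases eq_or_lt_of_le (zero_le : 0 ≤ P A) with hz | hp
  · have hz : P A = 0 := hz.symm
    have h1 : P (E ∩ A) = 0 := le_antisymm (hz ▸ measure_mono Set.inter_subset_right) zero_le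
    simp [h1, hz]
  · have hlt := h E A hE hA hAD hp
    have hApos : 0 < (P A).toReal :=
      ENNReal.toReal_pos hp.ne' (measure_ne_top P A)
    have heq : (P (E ∩ A)).toReal - (P E).toReal * (P A).toReal
        = ((P (E ∩ A)).toReal / (P A).toReal - (P E).toReal) * (P A).toReal := by
      field_simp
    rw [heq, abs_mul, abs_of_pos hApos]
    exact le_of_lt (mul_lt_mul_of_pos_right hlt hApos)

lemma aux_sign {Ω : Type*} [F : MeasurableSpace Ω] (P : Measure Ω) [IsProbabilityMeasure P]
    (G H : MeasurableSpace Ω) (hG : G ≤ F) (hH : H ≤ F) (ε : ℝ) (D : Set Ω)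
    (h : ∀ E A : Set Ω, MeasurableSet[G] E → MeasurableSet[H] A → A ⊆ D → 0 < P A →
      |(P (E ∩ A)).toReal / (P A).toReal - (P E).toReal| < ε)
    {I : ℕ} (E : Fin I → Set Ω) (hE : ∀ i, MeasurableSet[G] (E i))
    (hdis : Pairwise (Function.onFun Disjoint E))
    (A : Set Ω) (hA : MeasurableSet[H] A) (hAD : A ⊆ D) :
    ∑ i, |(P (E i ∩ A)).toReal - (P (E i)).toReal * (P A).toReal|
      ≤ 2 * ε * (P A).toReal := by
  set a : Fin I → ℝ := fun i => (P (E i ∩ A)).toReal - (P (E i)).toReal * (P A).toReal with ha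
  have hsub : ∀ t : Finset (Fin I), |∑ i ∈ t, a i| ≤ ε * (P A).toReal := by
    intro t
    have h1 : ∑ i ∈ t, (P (E i ∩ A)).toReal = (P ((⋃ i ∈ t, E i) ∩ A)).toReal := by
      rw [Set.iUnion₂_inter]
      rw [aux_biUnion (F := F) P t (fun i => E i ∩ A)
        (fun i => (hG _ (hE i)).inter (hH _ hA))
        (fun i j hij => (hdis hij).mono Set.inter_subset_left Set.inter_subset_left)]
    have h2 : ∑ i ∈ t, (P (E i)).toReal = (P (⋃ i ∈ t, E i)).toReal := by
      rw [aux_biUnion (F := F) P t E (fun i => hG _ (hE i)) hdis]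
    have h3 : ∑ i ∈ t, a i
        = (P ((⋃ i ∈ t, E i) ∩ A)).toReal - (P (⋃ i ∈ t, E i)).toReal * (P A).toReal := by
      rw [ha]
      rw [Finset.sum_sub_distrib, ← Finset.sum_mul, h1, h2]
    rw [h3]
    have hU : MeasurableSet[G] (⋃ i ∈ t, E i) := @Finset.measurableSet_biUnion Ω (Fin I) G E t (fun i _ => hE i)
    exact aux_key (F := F) P G H ε D h _ A hU hA hAD
  classical
  set t : Finset (Fin I) := Finset.univ.filter (fun i => 0 ≤ a i) with ht
  have hsplit : ∑ i, |a i| = ∑ i ∈ t, a i + ∑ i ∈ Finset.univ.filter (fun i => ¬ 0 ≤ a i), (-a i) := by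
    rw [← Finset.sum_filter_add_sum_filter_not Finset.univ (fun i => 0 ≤ a i) (fun i => |a i|)]
    congr 1
    · exact Finset.sum_congr rfl (fun i hi => abs_of_nonneg (Finset.mem_filter.mp hi).2)
    · exact Finset.sum_congr rfl (fun i hi =>
        abs_of_neg (lt_of_not_ge (Finset.mem_filter.mp hi).2))
  rw [hsplit]
  have hb1 : ∑ i ∈ t, a i ≤ ε * (P A).toReal := (le_abs_self _).trans (hsub t)
  have hb2 : ∑ i ∈ Finset.univ.filter (fun i => ¬ 0 ≤ a i), (-a i) ≤ ε * (P A).toReal := by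
    rw [Finset.sum_neg_distrib]
    exact (neg_le_abs _).trans (hsub _)
  linarith

/-- The β-mixing coefficient between two sub-σ-algebras `G` and `H`:
`β(G,H) = (1/2) · sup ∑ᵢ∑ⱼ |P(Eᵢ ∩ Aⱼ) − P(Eᵢ)·P(Aⱼ)|`, the supremum over all
finite measurable partitions `{Eᵢ} ⊆ G` and `{Aⱼ} ⊆ H` of the space. -/
noncomputable def betaMix {Ω : Type*} [MeasurableSpace Ω] (P : Measure Ω)
    (G H : MeasurableSpace Ω) : ℝ :=
  (1 / 2) * sSup { x : ℝ | ∃ (I J : ℕ) (E : Fin I → Set Ω) (A : Fin J → Set Ω),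
    (∀ i, MeasurableSet[G] (E i)) ∧ (∀ j, MeasurableSet[H] (A j)) ∧
    Pairwise (Function.onFun Disjoint E) ∧ Pairwise (Function.onFun Disjoint A) ∧
    (⋃ i, E i) = Set.univ ∧ (⋃ j, A j) = Set.univ ∧
    x = ∑ i, ∑ j, |(P (E i ∩ A j)).toReal - (P (E i)).toReal * (P (A j)).toReal| }

theorem stmt0 {Ω : Type*} [F : MeasurableSpace Ω] (P : Measure Ω) [IsProbabilityMeasure P]
    (G H : MeasurableSpace Ω) (hG : G ≤ F) (hH : H ≤ F)
    (ε : ℝ) (hε : 0 < ε) (D : Set Ω) (hD : MeasurableSet[H] D)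
    (h : ∀ E A : Set Ω, MeasurableSet[G] E → MeasurableSet[H] A → A ⊆ D → 0 < P A →
      |(P (E ∩ A)).toReal / (P A).toReal - (P E).toReal| < ε) :
    @betaMix Ω F P G H ≤ ε * (P D).toReal + (P Dᶜ).toReal := by
  have hDF : MeasurableSet[F] D := hH _ hD
  set c : ℝ := ε * (P D).toReal + (P Dᶜ).toReal with hc
  have hc0 : 0 ≤ c := by positivity
  have hsplit : ∀ X : Set Ω, (P X).toReal = (P (X ∩ D)).toReal + (P (X ∩ Dᶜ)).toReal := by
    intro X
    have := measure_inter_add_diff (μ := P) X hDF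
    rw [Set.diff_eq] at this
    rw [← this, ENNReal.toReal_add (measure_ne_top P _) (measure_ne_top P _)]
  unfold betaMix
  have hSup : sSup { x : ℝ | ∃ (I J : ℕ) (E : Fin I → Set Ω) (A : Fin J → Set Ω),
      (∀ i, MeasurableSet[G] (E i)) ∧ (∀ j, MeasurableSet[H] (A j)) ∧
      Pairwise (Function.onFun Disjoint E) ∧ Pairwise (Function.onFun Disjoint A) ∧
      (⋃ i, E i) = Set.univ ∧ (⋃ j, A j) = Set.univ ∧
      x = ∑ i, ∑ j, |(P (E i ∩ A j)).toReal - (P (E i)).toReal * (P (A j)).toReal| }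
      ≤ 2 * c := by
    apply Real.sSup_le _ (by linarith)
    rintro x ⟨I, J, E, A, hE, hA, hdE, hdA, hcE, hcA, rfl⟩
    rw [Finset.sum_comm]
    have hEF : ∀ i, MeasurableSet[F] (E i) := fun i => hG _ (hE i)
    have hperj : ∀ j : Fin J,
        ∑ i, |(P (E i ∩ A j)).toReal - (P (E i)).toReal * (P (A j)).toReal|
          ≤ 2 * ε * (P (A j ∩ D)).toReal + 2 * (P (A j ∩ Dᶜ)).toReal := by
      intro j
      have hterm : ∀ i : Fin I,
          |(P (E i ∩ A j)).toReal - (P (E i)).toReal * (P (A j)).toReal|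
          ≤ |(P (E i ∩ (A j ∩ D))).toReal - (P (E i)).toReal * (P (A j ∩ D)).toReal|
            + ((P (E i ∩ (A j ∩ Dᶜ))).toReal + (P (E i)).toReal * (P (A j ∩ Dᶜ)).toReal) := by
        intro i
        have h1 := hsplit (E i ∩ A j)
        have h2 := hsplit (A j)
        simp only [Set.inter_assoc] at h1
        have habs : |(P (E i ∩ (A j ∩ Dᶜ))).toReal - (P (E i)).toReal * (P (A j ∩ Dᶜ)).toReal|
            ≤ (P (E i ∩ (A j ∩ Dᶜ))).toReal + (P (E i)).toReal * (P (A j ∩ Dᶜ)).toReal := by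
          have := abs_sub ((P (E i ∩ (A j ∩ Dᶜ))).toReal) ((P (E i)).toReal * (P (A j ∩ Dᶜ)).toReal)
          calc |(P (E i ∩ (A j ∩ Dᶜ))).toReal - (P (E i)).toReal * (P (A j ∩ Dᶜ)).toReal|
              ≤ |(P (E i ∩ (A j ∩ Dᶜ))).toReal| + |(P (E i)).toReal * (P (A j ∩ Dᶜ)).toReal| :=
                abs_sub _ _
            _ = (P (E i ∩ (A j ∩ Dᶜ))).toReal + (P (E i)).toReal * (P (A j ∩ Dᶜ)).toReal := by
                rw [abs_of_nonneg ENNReal.toReal_nonneg, abs_of_nonneg (by positivity)]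
        calc |(P (E i ∩ A j)).toReal - (P (E i)).toReal * (P (A j)).toReal|
            = |((P (E i ∩ (A j ∩ D))).toReal - (P (E i)).toReal * (P (A j ∩ D)).toReal)
              + ((P (E i ∩ (A j ∩ Dᶜ))).toReal - (P (E i)).toReal * (P (A j ∩ Dᶜ)).toReal)| := by
              rw [h1, h2]; congr 1; ring
          _ ≤ _ := by
              refine (abs_add_le _ _).trans ?_
              exact add_le_add le_rfl habs
      calc ∑ i, |(P (E i ∩ A j)).toReal - (P (E i)).toReal * (P (A j)).toReal|
          ≤ ∑ i, (|(P (E i ∩ (A j ∩ D))).toReal - (P (E i)).toReal * (P (A j ∩ D)).toReal|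
            + ((P (E i ∩ (A j ∩ Dᶜ))).toReal + (P (E i)).toReal * (P (A j ∩ Dᶜ)).toReal)) :=
            Finset.sum_le_sum (fun i _ => hterm i)
        _ = (∑ i, |(P (E i ∩ (A j ∩ D))).toReal - (P (E i)).toReal * (P (A j ∩ D)).toReal|)
            + ((∑ i, (P (E i ∩ (A j ∩ Dᶜ))).toReal)
              + (∑ i, (P (E i)).toReal) * (P (A j ∩ Dᶜ)).toReal) := by
            rw [Finset.sum_add_distrib, Finset.sum_add_distrib, Finset.sum_mul]
        _ ≤ 2 * ε * (P (A j ∩ D)).toReal + 2 * (P (A j ∩ Dᶜ)).toReal := by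
            have hs := aux_sign (F := F) P G H hG hH ε D h E hE hdE (A j ∩ D)
              ((hA j).inter hD) Set.inter_subset_right
            have hp1 : ∑ i, (P (E i ∩ (A j ∩ Dᶜ))).toReal = (P (A j ∩ Dᶜ)).toReal :=
              aux_partsum (F := F) P E hEF hdE hcE _ (((hH _ (hA j))).inter hDF.compl)
            have hp2 : ∑ i, (P (E i)).toReal = 1 := by
              have := aux_partsum (F := F) P E hEF hdE hcE Set.univ MeasurableSet.univ
              simpa using this
            rw [hp1, hp2]
            have hnn : 0 ≤ (P (A j ∩ Dᶜ)).toReal := ENNReal.toReal_nonneg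
            linarith
    calc ∑ j, ∑ i, |(P (E i ∩ A j)).toReal - (P (E i)).toReal * (P (A j)).toReal|
        ≤ ∑ j, (2 * ε * (P (A j ∩ D)).toReal + 2 * (P (A j ∩ Dᶜ)).toReal) :=
          Finset.sum_le_sum (fun j _ => hperj j)
      _ = 2 * ε * (∑ j, (P (A j ∩ D)).toReal) + 2 * (∑ j, (P (A j ∩ Dᶜ)).toReal) := by
          rw [Finset.sum_add_distrib, Finset.mul_sum, Finset.mul_sum]
      _ = 2 * c := by
          rw [aux_partsum (F := F) P A (fun j => hH _ (hA j)) hdA hcA D hDF,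
            aux_partsum (F := F) P A (fun j => hH _ (hA j)) hdA hcA Dᶜ hDF.compl, hc]
          ring
  linarith
end

section
/- Let (Ω, ℱ, P) be a probability space, let ℋ be a sub-σ-algebra of ℱ, and let (𝒢_b)_{b>0} be a family of sub-σ-algebras of ℱ that is antitone in b (i.e. b ≤ b′ implies 𝒢_{b′} ⊆ 𝒢_b). Then lim_{b→∞} β(𝒢_b, ℋ) = 0 if and only if the following condition holds: for every ε > 0 there exist D ∈ ℋ with P(D) > 1 − ε and b > 0 such that for all E ∈ 𝒢_b and all A ∈ ℋ with A ⊆ D and P(A) > 0 one has |P(E|A) − P(E)| < ε. -/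
open MeasureTheory

namespace BetaAux

variable {Ω : Type*} [F : MeasurableSpace Ω]

lemma sum_finset_inter {ι : Type*} (P : Measure Ω) [IsFiniteMeasure P] (C : ι → Set Ω)
    (hC : ∀ i, MeasurableSet (C i)) (hd : Pairwise (Function.onFun Disjoint C))
    (s : Finset ι) (B : Set Ω) (hB : MeasurableSet B) :
    ∑ i ∈ s, (P (C i ∩ B)).toReal = (P ((⋃ i ∈ s, C i) ∩ B)).toReal := by
  have h1 : (⋃ i ∈ s, C i) ∩ B = ⋃ i ∈ s, (C i ∩ B) := by
    rw [Set.iUnion₂_inter]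
  rw [h1, measure_biUnion_finset]
  · rw [ENNReal.toReal_sum]
    intro i _
    exact (measure_ne_top P _)
  · intro i _ j _ hij
    exact Disjoint.mono Set.inter_subset_left Set.inter_subset_left (hd hij)
  · intro i _
    exact (hC i).inter hB

lemma sum_univ_inter {ι : Type*} [Fintype ι] (P : Measure Ω) [IsFiniteMeasure P] (C : ι → Set Ω)
    (hC : ∀ i, MeasurableSet (C i)) (hd : Pairwise (Function.onFun Disjoint C))
    (hu : (⋃ i, C i) = Set.univ) (B : Set Ω) (hB : MeasurableSet B) :
    ∑ i, (P (C i ∩ B)).toReal = (P B).toReal := by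
  have := sum_finset_inter P C hC hd Finset.univ B hB
  simpa [hu] using this

lemma sum_univ_one {ι : Type*} [Fintype ι] (P : Measure Ω) [IsProbabilityMeasure P] (C : ι → Set Ω)
    (hC : ∀ i, MeasurableSet (C i)) (hd : Pairwise (Function.onFun Disjoint C))
    (hu : (⋃ i, C i) = Set.univ) :
    ∑ i, (P (C i)).toReal = 1 := by
  have := sum_univ_inter P C hC hd hu Set.univ MeasurableSet.univ
  simpa using this

/-- The defining set of `betaMix`. -/
def bSet (P : Measure Ω) (G H : MeasurableSpace Ω) : Set ℝ :=
  { x : ℝ | ∃ (I J : ℕ) (E : Fin I → Set Ω) (A : Fin J → Set Ω),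
    (∀ i, MeasurableSet[G] (E i)) ∧ (∀ j, MeasurableSet[H] (A j)) ∧
    Pairwise (Function.onFun Disjoint E) ∧ Pairwise (Function.onFun Disjoint A) ∧
    (⋃ i, E i) = Set.univ ∧ (⋃ j, A j) = Set.univ ∧
    x = ∑ i, ∑ j, |(P (E i ∩ A j)).toReal - (P (E i)).toReal * (P (A j)).toReal| }

lemma zero_mem_bSet (P : Measure Ω) [IsProbabilityMeasure P] (G H : MeasurableSpace Ω) :
    0 ∈ bSet (F := F) P G H := by
  have h1 : ∀ _i : Fin 1, MeasurableSet[G] (Set.univ : Set Ω) := fun _ => @MeasurableSet.univ Ω G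
  have h2 : ∀ _j : Fin 1, MeasurableSet[H] (Set.univ : Set Ω) := fun _ => @MeasurableSet.univ Ω H
  have h3 : Pairwise (Function.onFun Disjoint (fun _ : Fin 1 => (Set.univ : Set Ω))) :=
    Subsingleton.pairwise
  have h4 : (⋃ _i : Fin 1, (Set.univ : Set Ω)) = Set.univ := Set.iUnion_const _
  have h5 : (0:ℝ) = ∑ _i : Fin 1, ∑ _j : Fin 1,
      |(P ((Set.univ : Set Ω) ∩ Set.univ)).toReal - (P (Set.univ : Set Ω)).toReal * (P (Set.univ : Set Ω)).toReal| := by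
    simp
  exact ⟨1, 1, fun _ => Set.univ, fun _ => Set.univ, h1, h2, h3, h3, h4, h4, h5⟩

lemma bSet_le_two (P : Measure Ω) [IsProbabilityMeasure P] {G H : MeasurableSpace Ω}
    (hG : G ≤ F) (hH : H ≤ F) : ∀ x ∈ bSet (F := F) P G H, x ≤ 2 := by
  rintro x ⟨I, J, E, A, hE, hA, hdE, hdA, huE, huA, rfl⟩
  have hE' : ∀ i, MeasurableSet[F] (E i) := fun i => hG _ (hE i)
  have hA' : ∀ j, MeasurableSet[F] (A j) := fun j => hH _ (hA j)
  have h1 : ∀ i j, |(P (E i ∩ A j)).toReal - (P (E i)).toReal * (P (A j)).toReal|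
      ≤ (P (E i ∩ A j)).toReal + (P (E i)).toReal * (P (A j)).toReal := by
    intro i j
    have h0 : (0:ℝ) ≤ (P (E i ∩ A j)).toReal := ENNReal.toReal_nonneg
    have h0' : (0:ℝ) ≤ (P (E i)).toReal * (P (A j)).toReal :=
      mul_nonneg ENNReal.toReal_nonneg ENNReal.toReal_nonneg
    rw [abs_sub_le_iff]; constructor <;> linarith
  calc ∑ i, ∑ j, |(P (E i ∩ A j)).toReal - (P (E i)).toReal * (P (A j)).toReal|
      ≤ ∑ i, ∑ j, ((P (E i ∩ A j)).toReal + (P (E i)).toReal * (P (A j)).toReal) := by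
        refine Finset.sum_le_sum fun i _ => Finset.sum_le_sum fun j _ => h1 i j
    _ = (∑ i, ∑ j, (P (E i ∩ A j)).toReal) + (∑ i, (P (E i)).toReal) * (∑ j, (P (A j)).toReal) := by
        rw [Finset.sum_mul]
        rw [← Finset.sum_add_distrib]
        congr 1; ext i
        rw [Finset.mul_sum, ← Finset.sum_add_distrib]
    _ ≤ 2 := by
        have hinner : ∀ i, ∑ j, (P (E i ∩ A j)).toReal = (P (E i)).toReal := by
          intro i
          have := sum_univ_inter (F := F) P A hA' hdA huA (E i) (hE' i)
          calc ∑ j, (P (E i ∩ A j)).toReal = ∑ j, (P (A j ∩ E i)).toReal := by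
                simp [Set.inter_comm]
            _ = (P (E i)).toReal := this
        rw [Finset.sum_congr rfl (fun i _ => hinner i)]
        rw [sum_univ_one (F := F) P E hE' hdE huE, sum_univ_one (F := F) P A hA' hdA huA]
        norm_num

lemma bSet_bddAbove (P : Measure Ω) [IsProbabilityMeasure P] {G H : MeasurableSpace Ω}
    (hG : G ≤ F) (hH : H ≤ F) : BddAbove (bSet (F := F) P G H) :=
  ⟨2, fun x hx => bSet_le_two (F := F) P hG hH x hx⟩

lemma sum_finset_plain {ι : Type*} (P : Measure Ω) [IsFiniteMeasure P] (C : ι → Set Ω)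
    (hC : ∀ i, MeasurableSet (C i)) (hd : Pairwise (Function.onFun Disjoint C))
    (s : Finset ι) :
    ∑ i ∈ s, (P (C i)).toReal = (P (⋃ i ∈ s, C i)).toReal := by
  have := sum_finset_inter P C hC hd s Set.univ MeasurableSet.univ
  simpa [Set.inter_univ] using this

lemma betaMix_eq (P : Measure Ω) (G H : MeasurableSpace Ω) :
    @betaMix Ω F P G H = (1 / 2) * sSup (bSet (F := F) P G H) := rfl

lemma mem_le_two_betaMix (P : Measure Ω) [IsProbabilityMeasure P] {G H : MeasurableSpace Ω}
    (hG : G ≤ F) (hH : H ≤ F) {x : ℝ} (hx : x ∈ bSet (F := F) P G H) :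
    x ≤ 2 * @betaMix Ω F P G H := by
  have h := le_csSup (bSet_bddAbove (F := F) P hG hH) hx
  rw [betaMix_eq (F := F)]; linarith

lemma betaMix_nonneg (P : Measure Ω) [IsProbabilityMeasure P] {G H : MeasurableSpace Ω}
    (hG : G ≤ F) (hH : H ≤ F) : 0 ≤ @betaMix Ω F P G H := by
  have := mem_le_two_betaMix (F := F) P hG hH (zero_mem_bSet (F := F) P G H)
  linarith

lemma betaMix_le_of_forall (P : Measure Ω) [IsProbabilityMeasure P] {G H : MeasurableSpace Ω}
    (c : ℝ) (hc : ∀ x ∈ bSet (F := F) P G H, x ≤ c) :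
    @betaMix Ω F P G H ≤ c / 2 := by
  rw [betaMix_eq (F := F)]
  have h := csSup_le ⟨0, zero_mem_bSet (F := F) P G H⟩ hc
  linarith

lemma betaMix_mono (P : Measure Ω) [IsProbabilityMeasure P] {G G' H : MeasurableSpace Ω}
    (hG : G ≤ F) (hH : H ≤ F) (hGG' : G' ≤ G) :
    @betaMix Ω F P G' H ≤ @betaMix Ω F P G H := by
  rw [betaMix_eq (F := F), betaMix_eq (F := F)]
  have hsub : bSet (F := F) P G' H ⊆ bSet (F := F) P G H := by
    rintro x ⟨I, J, E, A, hE, hA, hdE, hdA, huE, huA, rfl⟩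
    exact ⟨I, J, E, A, fun i => hGG' _ (hE i), hA, hdE, hdA, huE, huA, rfl⟩
  have h := csSup_le_csSup (bSet_bddAbove (F := F) P hG hH)
    ⟨0, zero_mem_bSet (F := F) P G' H⟩ hsub
  linarith

lemma pairs_le_betaMix {n : ℕ} (P : Measure Ω) [IsProbabilityMeasure P]
    {G H : MeasurableSpace Ω} (hG : G ≤ F) (hH : H ≤ F)
    (E A : Fin n → Set Ω) (hE : ∀ k, MeasurableSet[G] (E k))
    (hA : ∀ k, MeasurableSet[H] (A k)) (hd : Pairwise (Function.onFun Disjoint A)) :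
    ∑ k, |(P (E k ∩ A k)).toReal - (P (E k)).toReal * (P (A k)).toReal|
      ≤ 2 * @betaMix Ω F P G H := by
  classical
  -- atoms of the finite algebra generated by the `E k`
  set atom : (Fin n → Bool) → Set Ω := fun σ => ⋂ k, (if σ k then E k else (E k)ᶜ) with hatom
  have hatomG : ∀ σ, MeasurableSet[G] (atom σ) := by
    intro σ
    refine MeasurableSet.iInter fun k => ?_
    cases hσ : σ k
    · simpa [hσ] using (hE k).compl
    · simpa [hσ] using hE k
  have hsub_true : ∀ σ k, σ k = true → atom σ ⊆ E k := by
    intro σ k hk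
    refine Set.iInter_subset_of_subset k ?_
    simp [hk]
  have hsub_false : ∀ σ k, σ k = false → atom σ ⊆ (E k)ᶜ := by
    intro σ k hk
    refine Set.iInter_subset_of_subset k ?_
    simp [hk]
  have hatom_disj : Pairwise (Function.onFun Disjoint atom) := by
    intro σ σ' hσσ
    obtain ⟨k, hk⟩ : ∃ k, σ k ≠ σ' k := by
      by_contra h
      push_neg at h
      exact hσσ (funext h)
    cases h1 : σ k <;> cases h2 : σ' k
    · exact absurd (h1.trans h2.symm) hk
    · exact Disjoint.mono (hsub_false σ k h1) (hsub_true σ' k h2) disjoint_compl_left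
    · exact Disjoint.mono (hsub_true σ k h1) (hsub_false σ' k h2) disjoint_compl_right
    · exact absurd (h1.trans h2.symm) hk
  have hmem_atom : ∀ ω : Ω, ω ∈ atom (fun k => decide (ω ∈ E k)) := by
    intro ω
    refine Set.mem_iInter.2 fun k => ?_
    by_cases h : ω ∈ E k <;> simp [h]
  have hatom_cover : (⋃ σ, atom σ) = Set.univ := by
    refine Set.eq_univ_of_forall fun ω => Set.mem_iUnion.2 ⟨_, hmem_atom ω⟩
  have hEk_eq : ∀ k : Fin n,
      (⋃ σ ∈ Finset.univ.filter (fun σ : Fin n → Bool => σ k = true), atom σ) = E k := by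
    intro k
    apply subset_antisymm
    · refine Set.iUnion₂_subset fun σ hσ => hsub_true σ k (by simpa using hσ)
    · intro ω hω
      refine Set.mem_iUnion₂.2 ⟨fun k' => decide (ω ∈ E k'), ?_, hmem_atom ω⟩
      simp [hω]
  -- the H-side partition: the `A k` together with the complement of their union
  set A' : Fin (n + 1) → Set Ω := Fin.snoc A ((⋃ k, A k)ᶜ) with hA'
  have hA'H : ∀ j, MeasurableSet[H] (A' j) := by
    intro j
    refine Fin.lastCases ?_ ?_ j
    · simpa [hA', Fin.snoc_last] using
        (MeasurableSet.compl (MeasurableSet.iUnion fun k => hA k))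
    · intro k
      simpa [hA', Fin.snoc_castSucc] using hA k
  have hA'disj : Pairwise (Function.onFun Disjoint A') := by
    intro i j hij
    induction i using Fin.lastCases with
    | last =>
      induction j using Fin.lastCases with
      | last => exact absurd rfl hij
      | cast k =>
        simp only [hA', Fin.snoc_last, Fin.snoc_castSucc, Function.onFun]
        exact disjoint_compl_left.mono_right (Set.subset_iUnion A k)
    | cast k =>
      induction j using Fin.lastCases with
      | last =>
        simp only [hA', Fin.snoc_last, Fin.snoc_castSucc, Function.onFun]
        exact disjoint_compl_right.mono_left (Set.subset_iUnion A k)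
      | cast k' =>
        simp only [hA', Fin.snoc_castSucc, Function.onFun]
        exact hd (fun h => hij (congrArg Fin.castSucc h))
  have hA'cover : (⋃ j, A' j) = Set.univ := by
    refine Set.eq_univ_of_forall fun ω => ?_
    by_cases h : ω ∈ ⋃ k, A k
    · obtain ⟨k, hk⟩ := Set.mem_iUnion.1 h
      exact Set.mem_iUnion.2 ⟨Fin.castSucc k, by simpa [hA', Fin.snoc_castSucc] using hk⟩
    · exact Set.mem_iUnion.2 ⟨Fin.last n, by simpa [hA', Fin.snoc_last] using h⟩
  -- membership in bSet
  set e : Fin (Fintype.card (Fin n → Bool)) ≃ (Fin n → Bool) := (Fintype.equivFin _).symm with he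
  set x : ℝ := ∑ σ : Fin n → Bool, ∑ j,
      |(P (atom σ ∩ A' j)).toReal - (P (atom σ)).toReal * (P (A' j)).toReal| with hx
  have hxmem : x ∈ bSet (F := F) P G H := by
    refine ⟨Fintype.card (Fin n → Bool), n + 1, atom ∘ e, A', fun i => hatomG (e i), hA'H,
      ?_, hA'disj, ?_, hA'cover, ?_⟩
    · intro i i' hii'
      exact hatom_disj (fun h => hii' (e.injective h))
    · rw [← hatom_cover]
      exact e.surjective.iUnion_comp atom
    · rw [hx]
      exact (Fintype.sum_equiv e _ _ fun i => rfl).symm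
  have hxle := mem_le_two_betaMix (F := F) P hG hH hxmem
  refine le_trans ?_ hxle
  -- now the combinatorial estimate
  have key : ∀ k : Fin n,
      |(P (E k ∩ A k)).toReal - (P (E k)).toReal * (P (A k)).toReal|
        ≤ ∑ σ : Fin n → Bool, |(P (atom σ ∩ A k)).toReal - (P (atom σ)).toReal * (P (A k)).toReal| := by
    intro k
    set s : Finset (Fin n → Bool) := Finset.univ.filter (fun σ => σ k = true) with hs
    have h1 : ∑ σ ∈ s, (P (atom σ ∩ A k)).toReal = (P (E k ∩ A k)).toReal := by
      rw [sum_finset_inter (F := F) P atom (fun σ => hG _ (hatomG σ)) hatom_disj s (A k) (hH _ (hA k))]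
      rw [hs, hEk_eq k]
    have h2 : ∑ σ ∈ s, (P (atom σ)).toReal = (P (E k)).toReal := by
      rw [sum_finset_plain (F := F) P atom (fun σ => hG _ (hatomG σ)) hatom_disj s]
      rw [hs, hEk_eq k]
    have h3 : ∑ σ ∈ s, ((P (atom σ ∩ A k)).toReal - (P (atom σ)).toReal * (P (A k)).toReal)
        = (P (E k ∩ A k)).toReal - (P (E k)).toReal * (P (A k)).toReal := by
      rw [Finset.sum_sub_distrib, h1, ← Finset.sum_mul, h2]
    calc |(P (E k ∩ A k)).toReal - (P (E k)).toReal * (P (A k)).toReal|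
        = |∑ σ ∈ s, ((P (atom σ ∩ A k)).toReal - (P (atom σ)).toReal * (P (A k)).toReal)| := by
          rw [h3]
      _ ≤ ∑ σ ∈ s, |(P (atom σ ∩ A k)).toReal - (P (atom σ)).toReal * (P (A k)).toReal| :=
          Finset.abs_sum_le_sum_abs _ _
      _ ≤ ∑ σ : Fin n → Bool, |(P (atom σ ∩ A k)).toReal - (P (atom σ)).toReal * (P (A k)).toReal| :=
          Finset.sum_le_sum_of_subset_of_nonneg (Finset.subset_univ s)
            (fun _ _ _ => abs_nonneg _)
  calc ∑ k, |(P (E k ∩ A k)).toReal - (P (E k)).toReal * (P (A k)).toReal|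
      ≤ ∑ k, ∑ σ : Fin n → Bool,
          |(P (atom σ ∩ A k)).toReal - (P (atom σ)).toReal * (P (A k)).toReal| :=
        Finset.sum_le_sum fun k _ => key k
    _ = ∑ σ : Fin n → Bool, ∑ k,
          |(P (atom σ ∩ A k)).toReal - (P (atom σ)).toReal * (P (A k)).toReal| :=
        Finset.sum_comm
    _ ≤ x := by
        rw [hx]
        refine Finset.sum_le_sum fun σ _ => ?_
        rw [Fin.sum_univ_castSucc]
        have : ∀ k : Fin n, A' (Fin.castSucc k) = A k := fun k => by
          simp [hA', Fin.snoc_castSucc]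
        simp only [this]
        have : (0:ℝ) ≤ |(P (atom σ ∩ A' (Fin.last n))).toReal
            - (P (atom σ)).toReal * (P (A' (Fin.last n))).toReal| := abs_nonneg _
        linarith

lemma toReal_split (P : Measure Ω) [IsFiniteMeasure P] (S T : Set Ω) (hT : MeasurableSet T) :
    (P S).toReal = (P (S ∩ T)).toReal + (P (S \ T)).toReal := by
  rw [← ENNReal.toReal_add (measure_ne_top _ _) (measure_ne_top _ _),
    measure_inter_add_diff S hT]

lemma bSet_le_of_cond (P : Measure Ω) [IsProbabilityMeasure P] {G H : MeasurableSpace Ω}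
    (hG : G ≤ F) (hH : H ≤ F) {ε : ℝ} (hε : 0 < ε) (D : Set Ω) (hD : MeasurableSet[H] D)
    (hPD : 1 - ε < (P D).toReal)
    (hcond : ∀ E A : Set Ω, MeasurableSet[G] E → MeasurableSet[H] A → A ⊆ D → 0 < P A →
      |(P (E ∩ A)).toReal / (P A).toReal - (P E).toReal| < ε) :
    ∀ x ∈ bSet (F := F) P G H, x ≤ 4 * ε := by
  rintro x ⟨I, J, E, A, hE, hA, hdE, hdA, huE, huA, rfl⟩
  have hEF : ∀ i, MeasurableSet[F] (E i) := fun i => hG _ (hE i)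
  have hAF : ∀ j, MeasurableSet[F] (A j) := fun j => hH _ (hA j)
  have hDF : MeasurableSet[F] D := hH _ hD
  set d1 : Fin I → Fin J → ℝ := fun i j =>
    (P ((E i ∩ A j) ∩ D)).toReal - (P (E i)).toReal * (P (A j ∩ D)).toReal with hd1
  set d2 : Fin I → Fin J → ℝ := fun i j =>
    (P ((E i ∩ A j) \ D)).toReal - (P (E i)).toReal * (P (A j \ D)).toReal with hd2
  have hsplit : ∀ i j, (P (E i ∩ A j)).toReal - (P (E i)).toReal * (P (A j)).toReal
      = d1 i j + d2 i j := by
    intro i j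
    rw [hd1, hd2]
    have h1 := toReal_split (F := F) P (E i ∩ A j) D hDF
    have h2 := toReal_split (F := F) P (A j) D hDF
    simp only []
    rw [h1, h2]
    ring
  have habs : ∀ i j, |(P (E i ∩ A j)).toReal - (P (E i)).toReal * (P (A j)).toReal|
      ≤ |d1 i j| + |d2 i j| := fun i j => by rw [hsplit i j]; exact abs_add_le _ _
  have hPDc : (P (D : Set Ω)ᶜ).toReal < ε := by
    have h1 : (P (D : Set Ω)ᶜ).toReal = 1 - (P D).toReal := by
      rw [measure_compl hDF (measure_ne_top _ _)]
      rw [ENNReal.toReal_sub_of_le (measure_mono (Set.subset_univ D)) (measure_ne_top _ _)]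
      simp
    linarith
  -- bound on the d2 part
  have hbound2 : ∑ i, ∑ j, |d2 i j| ≤ 2 * (P (D : Set Ω)ᶜ).toReal := by
    have hterm : ∀ i j, |d2 i j| ≤ (P ((E i ∩ A j) \ D)).toReal
        + (P (E i)).toReal * (P (A j \ D)).toReal := by
      intro i j
      rw [hd2]
      have h0 : (0:ℝ) ≤ (P ((E i ∩ A j) \ D)).toReal := ENNReal.toReal_nonneg
      have h0' : (0:ℝ) ≤ (P (E i)).toReal * (P (A j \ D)).toReal :=
        mul_nonneg ENNReal.toReal_nonneg ENNReal.toReal_nonneg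
      simp only []
      rw [abs_sub_le_iff]; constructor <;> linarith
    calc ∑ i, ∑ j, |d2 i j|
        ≤ ∑ i, ∑ j, ((P ((E i ∩ A j) \ D)).toReal
            + (P (E i)).toReal * (P (A j \ D)).toReal) :=
          Finset.sum_le_sum fun i _ => Finset.sum_le_sum fun j _ => hterm i j
      _ = (∑ i, ∑ j, (P ((E i ∩ A j) \ D)).toReal)
            + (∑ i, (P (E i)).toReal) * (∑ j, (P (A j \ D)).toReal) := by
          simp only [Finset.sum_add_distrib, ← Finset.mul_sum]
          rw [Finset.sum_mul]
      _ ≤ 2 * (P (D : Set Ω)ᶜ).toReal := by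
          have hset : ∀ (i : Fin I) (j : Fin J), (E i ∩ A j) \ D = E i ∩ (A j \ D) := by
            intro i j; ext ω; simp only [Set.mem_diff, Set.mem_inter_iff]; tauto
          have hA_D : ∑ j, (P (A j \ D)).toReal = (P (D : Set Ω)ᶜ).toReal := by
            have hdiff : ∀ j, A j \ D = A j ∩ Dᶜ := fun j => Set.diff_eq _ _
            simp only [hdiff]
            exact sum_univ_inter (F := F) P A hAF hdA huA Dᶜ hDF.compl
          have hfirst : ∑ i, ∑ j, (P ((E i ∩ A j) \ D)).toReal = (P (D : Set Ω)ᶜ).toReal := by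
            rw [Finset.sum_comm]
            have hj : ∀ j, ∑ i, (P ((E i ∩ A j) \ D)).toReal = (P (A j \ D)).toReal := by
              intro j
              have h := sum_univ_inter (F := F) P E hEF hdE huE (A j \ D) ((hAF j).diff hDF)
              simp only [hset]
              exact h
            rw [Finset.sum_congr rfl fun j _ => hj j, hA_D]
          rw [hfirst, sum_univ_one (F := F) P E hEF hdE huE, hA_D]
          have h0 : 0 ≤ (P (D : Set Ω)ᶜ).toReal := ENNReal.toReal_nonneg
          linarith
  -- bound on the d1 part
  have hbound1 : ∑ i, ∑ j, |d1 i j| ≤ 2 * ε := by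
    have hperj : ∀ j : Fin J, ∑ i, |d1 i j| ≤ 2 * ε * (P (A j ∩ D)).toReal := by
      intro j
      by_cases hB0 : P (A j ∩ D) = 0
      · have hzero : ∀ i, d1 i j = 0 := by
          intro i
          rw [hd1]
          have h1 : P ((E i ∩ A j) ∩ D) = 0 := by
            refine measure_mono_null ?_ hB0
            intro ω hω; exact ⟨hω.1.2, hω.2⟩
          simp only [h1, hB0]
          simp
        simp only [hzero, abs_zero, Finset.sum_const_zero]
        positivity
      · have hBpos : 0 < P (A j ∩ D) := lt_of_le_of_ne zero_le (Ne.symm hB0)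
        set a := (P (A j ∩ D)).toReal with ha
        have hapos : 0 < a := ENNReal.toReal_pos hB0 (measure_ne_top _ _)
        set d : Fin I → ℝ := fun i => (P (E i ∩ (A j ∩ D))).toReal - (P (E i)).toReal * a
          with hdd
        have hd1d : ∀ i, d1 i j = d i := by
          intro i; rw [hd1, hdd]
          simp only [Set.inter_assoc]
          rw [ha]
        have hBmeasF : MeasurableSet[F] (A j ∩ D) := (hAF j).inter hDF
        have hsum0 : ∑ i, d i = 0 := by
          rw [hdd]
          rw [Finset.sum_sub_distrib, ← Finset.sum_mul,
            sum_univ_inter (F := F) P E hEF hdE huE (A j ∩ D) hBmeasF,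
            sum_univ_one (F := F) P E hEF hdE huE]
          ring
        set S : Finset (Fin I) := Finset.univ.filter (fun i => 0 ≤ d i) with hS
        have habs_eq : ∑ i, |d i| = 2 * ∑ i ∈ S, d i := by
          have h1 : ∑ i ∈ S, d i
              + ∑ i ∈ Finset.univ.filter (fun i => ¬ 0 ≤ d i), d i = ∑ i, d i := by
            rw [hS]; exact Finset.sum_filter_add_sum_filter_not _ _ _
          have h2 : ∑ i ∈ S, |d i|
              + ∑ i ∈ Finset.univ.filter (fun i => ¬ 0 ≤ d i), |d i| = ∑ i, |d i| := by
            rw [hS]; exact Finset.sum_filter_add_sum_filter_not _ _ _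
          have h3 : ∑ i ∈ S, |d i| = ∑ i ∈ S, d i := by
            refine Finset.sum_congr rfl fun i hi => abs_of_nonneg ?_
            rw [hS] at hi
            exact (Finset.mem_filter.1 hi).2
          have h4 : ∑ i ∈ Finset.univ.filter (fun i => ¬ 0 ≤ d i), |d i|
              = - ∑ i ∈ Finset.univ.filter (fun i => ¬ 0 ≤ d i), d i := by
            rw [← Finset.sum_neg_distrib]
            refine Finset.sum_congr rfl fun i hi => abs_of_neg ?_
            exact lt_of_not_ge (Finset.mem_filter.1 hi).2
          rw [hsum0] at h1
          rw [← h2, h3, h4]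
          linarith
        have hESG : MeasurableSet[G] (⋃ i ∈ S, E i) :=
          MeasurableSet.biUnion S.countable_toSet (fun i _ => hE i)
        have hsum_inter : ∑ i ∈ S, (P (E i ∩ (A j ∩ D))).toReal
            = (P ((⋃ i ∈ S, E i) ∩ (A j ∩ D))).toReal :=
          sum_finset_inter (F := F) P E hEF hdE S (A j ∩ D) hBmeasF
        have hsum_plain : ∑ i ∈ S, (P (E i)).toReal = (P (⋃ i ∈ S, E i)).toReal :=
          sum_finset_plain (F := F) P E hEF hdE S
        have hSsum : ∑ i ∈ S, d i
            = (P ((⋃ i ∈ S, E i) ∩ (A j ∩ D))).toReal - (P (⋃ i ∈ S, E i)).toReal * a := by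
          rw [hdd]
          rw [Finset.sum_sub_distrib, ← Finset.sum_mul, hsum_inter, hsum_plain]
        have hc := hcond (⋃ i ∈ S, E i) (A j ∩ D) hESG ((hA j).inter hD)
          Set.inter_subset_right hBpos
        have hkey : (P ((⋃ i ∈ S, E i) ∩ (A j ∩ D))).toReal
            - (P (⋃ i ∈ S, E i)).toReal * a ≤ ε * a := by
          rw [← ha] at hc
          have h5 : (P ((⋃ i ∈ S, E i) ∩ (A j ∩ D))).toReal / a
              - (P (⋃ i ∈ S, E i)).toReal < ε := (abs_lt.1 hc).2
          have h6 := mul_lt_mul_of_pos_right h5 hapos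
          rw [sub_mul, div_mul_cancel₀ _ (ne_of_gt hapos)] at h6
          linarith
        calc ∑ i, |d1 i j| = ∑ i, |d i| := by simp only [hd1d]
          _ = 2 * ∑ i ∈ S, d i := habs_eq
          _ ≤ 2 * (ε * a) := by rw [hSsum]; linarith [hkey]
          _ = 2 * ε * a := by ring
    calc ∑ i, ∑ j, |d1 i j| = ∑ j, ∑ i, |d1 i j| := Finset.sum_comm
      _ ≤ ∑ j, 2 * ε * (P (A j ∩ D)).toReal := Finset.sum_le_sum fun j _ => hperj j
      _ = 2 * ε * (P D).toReal := by
          rw [← Finset.mul_sum, sum_univ_inter (F := F) P A hAF hdA huA D hDF]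
      _ ≤ 2 * ε := by
          have h1 : (P D).toReal ≤ 1 := by
            have h2 := ENNReal.toReal_mono (measure_ne_top P Set.univ)
              (measure_mono (Set.subset_univ D))
            simpa using h2
          nlinarith
  calc ∑ i, ∑ j, |(P (E i ∩ A j)).toReal - (P (E i)).toReal * (P (A j)).toReal|
      ≤ ∑ i, ∑ j, (|d1 i j| + |d2 i j|) :=
        Finset.sum_le_sum fun i _ => Finset.sum_le_sum fun j _ => habs i j
    _ = (∑ i, ∑ j, |d1 i j|) + (∑ i, ∑ j, |d2 i j|) := by
        simp [Finset.sum_add_distrib]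
    _ ≤ 2 * ε + 2 * (P (D : Set Ω)ᶜ).toReal := add_le_add hbound1 hbound2
    _ ≤ 4 * ε := by linarith [hPDc]

lemma exists_good_D (P : Measure Ω) [IsProbabilityMeasure P]
    {Gb H : MeasurableSpace Ω} (hG : Gb ≤ F) (hH : H ≤ F)
    {ε : ℝ} (hε : 0 < ε) (hβ : @betaMix Ω F P Gb H < ε ^ 2 / 2) :
    ∃ D : Set Ω, MeasurableSet[H] D ∧ 1 - ε < (P D).toReal ∧
      ∀ E A : Set Ω, MeasurableSet[Gb] E → MeasurableSet[H] A → A ⊆ D → 0 < P A →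
        |(P (E ∩ A)).toReal / (P A).toReal - (P E).toReal| < ε := by
  classical
  set β := @betaMix Ω F P Gb H with hβdef
  have hβ0 : 0 ≤ β := betaMix_nonneg (F := F) P hG hH
  set Bad : Set Ω → Prop := fun A => MeasurableSet[H] A ∧ 0 < P A ∧
    ∃ E, MeasurableSet[Gb] E ∧
      ε ≤ |(P (E ∩ A)).toReal / (P A).toReal - (P E).toReal| with hBad
  have hBadE : ∀ A, Bad A → ∃ E, MeasurableSet[Gb] E ∧
      ε * (P A).toReal ≤ |(P (E ∩ A)).toReal - (P E).toReal * (P A).toReal| := by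
    intro A hA
    obtain ⟨hAH, hApos, E, hEG, hge⟩ := hA
    refine ⟨E, hEG, ?_⟩
    have ha : 0 < (P A).toReal := ENNReal.toReal_pos (ne_of_gt hApos) (measure_ne_top _ _)
    have heq0 : (P (E ∩ A)).toReal - (P E).toReal * (P A).toReal
        = ((P (E ∩ A)).toReal / (P A).toReal - (P E).toReal) * (P A).toReal := by
      rw [sub_mul, div_mul_cancel₀ _ (ne_of_gt ha)]
    rw [heq0, abs_mul, abs_of_pos ha]
    exact mul_le_mul_of_nonneg_right hge (le_of_lt ha)
  set m : Set Ω → ℝ := fun U => sSup {x | ∃ A, Bad A ∧ A ⊆ Uᶜ ∧ x = (P A).toReal} with hm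
  set nxt : Set Ω → Set Ω := fun U =>
    if h : ∃ A, Bad A ∧ A ⊆ Uᶜ ∧ m U / 2 < (P A).toReal then h.choose else ∅ with hnxt
  have htoReal_le_one : ∀ A : Set Ω, (P A).toReal ≤ 1 := by
    intro A
    have h2 := ENNReal.toReal_mono (measure_ne_top P Set.univ)
      (measure_mono (Set.subset_univ A))
    simpa using h2
  have hnxt_spec : ∀ U : Set Ω, (∃ A, Bad A ∧ A ⊆ Uᶜ) →
      Bad (nxt U) ∧ nxt U ⊆ Uᶜ ∧ m U / 2 < (P (nxt U)).toReal := by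
    intro U ⟨A0, hA0, hsub0⟩
    have hmemA0 : (P A0).toReal ∈ {x | ∃ A, Bad A ∧ A ⊆ Uᶜ ∧ x = (P A).toReal} :=
      ⟨A0, hA0, hsub0, rfl⟩
    have hbdd : BddAbove {x | ∃ A, Bad A ∧ A ⊆ Uᶜ ∧ x = (P A).toReal} := by
      refine ⟨1, ?_⟩
      rintro x ⟨A, hA, hsub, rfl⟩
      exact htoReal_le_one A
    have hA0pos : 0 < (P A0).toReal :=
      ENNReal.toReal_pos (ne_of_gt hA0.2.1) (measure_ne_top _ _)
    have hmpos : 0 < m U := lt_of_lt_of_le hA0pos (le_csSup hbdd hmemA0)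
    have hlt : m U / 2 < m U := by linarith
    obtain ⟨x, hxmem, hxlt⟩ := exists_lt_of_lt_csSup ⟨_, hmemA0⟩ hlt
    obtain ⟨A, hA, hsub, rfl⟩ := hxmem
    have hex : ∃ A, Bad A ∧ A ⊆ Uᶜ ∧ m U / 2 < (P A).toReal := ⟨A, hA, hsub, hxlt⟩
    rw [hnxt]
    simp only [dif_pos hex]
    exact ⟨hex.choose_spec.1, hex.choose_spec.2.1, hex.choose_spec.2.2⟩
  have hnxt_cases : ∀ U : Set Ω, nxt U = ∅ ∨ (Bad (nxt U) ∧ nxt U ⊆ Uᶜ) := by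
    intro U
    by_cases h : ∃ A, Bad A ∧ A ⊆ Uᶜ ∧ m U / 2 < (P A).toReal
    · right
      have heq : nxt U = h.choose := by rw [hnxt]; simp only [dif_pos h]
      rw [heq]
      exact ⟨h.choose_spec.1, h.choose_spec.2.1⟩
    · left
      rw [hnxt]; exact dif_neg h
  set U : ℕ → Set Ω := fun n => Nat.rec (motive := fun _ => Set Ω) ∅
    (fun _ Un => Un ∪ nxt Un) n with hU
  have hU0 : U 0 = ∅ := rfl
  have hUsucc : ∀ n, U (n + 1) = U n ∪ nxt (U n) := fun n => rfl
  set AA : ℕ → Set Ω := fun n => nxt (U n) with hAA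
  have hAA_H : ∀ n, MeasurableSet[H] (AA n) := by
    intro n
    rcases hnxt_cases (U n) with h | h
    · simp only [hAA]; rw [h]; exact @MeasurableSet.empty Ω H
    · exact h.1.1
  have hAAsub : ∀ n, AA n ⊆ (U n)ᶜ := by
    intro n
    rcases hnxt_cases (U n) with h | h
    · simp only [hAA]; rw [h]; exact Set.empty_subset _
    · exact h.2
  have hUmono : ∀ n k, n ≤ k → U n ⊆ U k := by
    intro n k hnk
    induction k with
    | zero => rw [Nat.le_zero.1 hnk]
    | succ k ih =>
      rcases Nat.lt_or_ge n (k+1) with h | h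
      · exact (ih (Nat.lt_succ_iff.1 h)).trans (by rw [hUsucc]; exact Set.subset_union_left)
      · have hnk1 : n = k + 1 := le_antisymm hnk h
        rw [hnk1]
  have hAAU : ∀ n, AA n ⊆ U (n + 1) := by
    intro n; rw [hUsucc]; exact Set.subset_union_right
  have hdisj : Pairwise (Function.onFun Disjoint AA) := by
    have key : ∀ {a b : ℕ}, a < b → Disjoint (AA a) (AA b) := by
      intro a b hab
      have h1 : AA a ⊆ U b := (hAAU a).trans (hUmono _ _ hab)
      have h2 : AA b ⊆ (U b)ᶜ := hAAsub b
      exact Set.disjoint_of_subset h1 h2 disjoint_compl_right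
    intro a b hab
    rcases lt_or_gt_of_ne hab with h | h
    · exact key h
    · exact (key h).symm
  -- the total mass of the chosen bad sets is bounded
  have hEk : ∀ k : ℕ, ∃ E, MeasurableSet[Gb] E ∧
      ε * (P (AA k)).toReal ≤ |(P (E ∩ AA k)).toReal - (P E).toReal * (P (AA k)).toReal| := by
    intro k
    rcases hnxt_cases (U k) with h | h
    · refine ⟨∅, @MeasurableSet.empty Ω Gb, ?_⟩
      simp only [hAA]
      rw [h]
      simp
    · exact hBadE _ h.1
  set EE : ℕ → Set Ω := fun k => (hEk k).choose with hEE
  have hEEspec : ∀ k, MeasurableSet[Gb] (EE k) ∧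
      ε * (P (AA k)).toReal ≤ |(P (EE k ∩ AA k)).toReal - (P (EE k)).toReal * (P (AA k)).toReal| :=
    fun k => (hEk k).choose_spec
  have hMn : ∀ n : ℕ, ∑ i : Fin n, (P (AA i)).toReal ≤ 2 * β / ε := by
    intro n
    have hple := pairs_le_betaMix (F := F) P hG hH (fun i : Fin n => EE i)
      (fun i : Fin n => AA i) (fun i => (hEEspec i).1) (fun i => hAA_H i)
      (fun i j hij => hdisj (fun h => hij (Fin.val_injective h)))
    have hterm : ∑ i : Fin n, ε * (P (AA i)).toReal
        ≤ ∑ i : Fin n, |(P (EE i ∩ AA i)).toReal - (P (EE i)).toReal * (P (AA i)).toReal| :=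
      Finset.sum_le_sum fun i _ => (hEEspec i).2
    rw [← Finset.mul_sum] at hterm
    rw [le_div_iff₀ hε]
    calc (∑ i : Fin n, (P (AA i)).toReal) * ε = ε * ∑ i : Fin n, (P (AA i)).toReal := by ring
      _ ≤ 2 * β := le_trans hterm hple
  set M : ℝ := 2 * β / ε with hMdef
  have hM0 : 0 ≤ M := by positivity
  set Utot : Set Ω := ⋃ n, AA n with hUtot
  have hUtot_H : MeasurableSet[H] Utot := MeasurableSet.iUnion hAA_H
  have hPUtot : (P Utot).toReal ≤ M := by
    have h1 : P Utot = ∑' n, P (AA n) :=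
      measure_iUnion hdisj (fun n => hH _ (hAA_H n))
    have h2 : ∑' n, P (AA n) ≤ ENNReal.ofReal M := by
      rw [ENNReal.tsum_eq_iSup_sum]
      refine iSup_le fun s => ?_
      obtain ⟨n, hn⟩ := s.exists_nat_subset_range
      have h3 : ∑ i ∈ s, P (AA i) ≤ ∑ i ∈ Finset.range n, P (AA i) :=
        Finset.sum_le_sum_of_subset hn
      refine le_trans h3 ?_
      have h4 : ∑ i ∈ Finset.range n, P (AA i) ≠ ⊤ :=
        (ENNReal.sum_lt_top.2 fun i _ => measure_lt_top P _).ne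
      rw [ENNReal.le_ofReal_iff_toReal_le h4 hM0]
      rw [ENNReal.toReal_sum (s := Finset.range n) (f := fun i => P (AA i))
        (fun i _ => measure_ne_top P (AA i))]
      calc ∑ i ∈ Finset.range n, (P (AA i)).toReal
          = ∑ i : Fin n, (P (AA i)).toReal := (Fin.sum_univ_eq_sum_range _ n).symm
        _ ≤ M := hMn n
    rw [h1]
    calc (∑' n, P (AA n)).toReal ≤ (ENNReal.ofReal M).toReal :=
        ENNReal.toReal_mono ENNReal.ofReal_ne_top h2
      _ = M := ENNReal.toReal_ofReal hM0
  have hMε : M < ε := by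
    rw [hMdef, div_lt_iff₀ hε]
    nlinarith
  refine ⟨Utotᶜ, hUtot_H.compl, ?_, ?_⟩
  · have h1 : (P Utotᶜ).toReal = 1 - (P Utot).toReal := by
      rw [measure_compl (hH _ hUtot_H) (measure_ne_top _ _),
        ENNReal.toReal_sub_of_le (measure_mono (Set.subset_univ _)) (measure_ne_top _ _)]
      simp
    rw [h1]
    linarith
  · intro E A hEG hAH hsub hApos
    by_contra hcon
    push_neg at hcon
    have hABad : Bad A := ⟨hAH, hApos, E, hEG, hcon⟩
    have hUsubUtot : ∀ n, U n ⊆ Utot := by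
      intro n
      induction n with
      | zero => rw [hU0]; exact Set.empty_subset _
      | succ k ih =>
        rw [hUsucc]
        exact Set.union_subset ih (by rw [hUtot]; exact (Set.subset_iUnion AA k))
    have hAsubn : ∀ n, A ⊆ (U n)ᶜ := by
      intro n
      exact hsub.trans (Set.compl_subset_compl.2 (hUsubUtot n))
    set c : ℝ := (P A).toReal with hc
    have hcpos : 0 < c := ENNReal.toReal_pos (ne_of_gt hApos) (measure_ne_top _ _)
    have hAAn_big : ∀ n, c / 2 < (P (AA n)).toReal := by
      intro n
      have hspec := hnxt_spec (U n) ⟨A, hABad, hAsubn n⟩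
      have hbdd : BddAbove {x | ∃ A', Bad A' ∧ A' ⊆ (U n)ᶜ ∧ x = (P A').toReal} := by
        refine ⟨1, ?_⟩
        rintro x ⟨A', hA', hsub', rfl⟩
        exact htoReal_le_one A'
      have hmem : c ∈ {x | ∃ A', Bad A' ∧ A' ⊆ (U n)ᶜ ∧ x = (P A').toReal} :=
        ⟨A, hABad, hAsubn n, rfl⟩
      have h5 : c ≤ m (U n) := le_csSup hbdd hmem
      have h6 := hspec.2.2
      linarith
    obtain ⟨n, hn⟩ := exists_nat_gt (M / (c / 2))
    have h7 : (n : ℝ) * (c / 2) ≤ ∑ i : Fin n, (P (AA i)).toReal := by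
      have he1 : (n : ℝ) * (c / 2) = ∑ _i : Fin n, c / 2 := by
        rw [Finset.sum_const, Finset.card_univ, Fintype.card_fin, nsmul_eq_mul]
      rw [he1]
      exact Finset.sum_le_sum fun i _ => (hAAn_big i).le
    have h8 : (n : ℝ) * (c / 2) ≤ M := le_trans h7 (hMn n)
    have h9 : M / (c / 2) * (c / 2) < (n : ℝ) * (c / 2) :=
      mul_lt_mul_of_pos_right hn (by linarith)
    rw [div_mul_cancel₀ _ (by linarith : c / 2 ≠ 0)] at h9
    linarith

end BetaAux

open BetaAux in
/-- `lim_{b→∞} β(𝒢_b, ℋ) = 0` iff the weak-Bernoulli-type condition holds: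
for every `ε > 0` there are `D ∈ ℋ` with `P(D) > 1 − ε` and `b > 0` such that
for all `E ∈ 𝒢_b` and `A ∈ ℋ` with `A ⊆ D`, `P(A) > 0`, one has
`|P(E|A) − P(E)| < ε`. -/
theorem stmt1 {Ω : Type*} [F : MeasurableSpace Ω] (P : Measure Ω) [IsProbabilityMeasure P]
    (G : ℝ → MeasurableSpace Ω) (H : MeasurableSpace Ω)
    (hG : ∀ b, G b ≤ F) (hH : H ≤ F)
    (hanti : ∀ b b' : ℝ, 0 < b → b ≤ b' → G b' ≤ G b) :
    Filter.Tendsto (fun b => @betaMix Ω F P (G b) H) Filter.atTop (nhds 0) ↔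
      (∀ ε : ℝ, 0 < ε → ∃ D : Set Ω, MeasurableSet[H] D ∧ 1 - ε < (P D).toReal ∧
        ∃ b : ℝ, 0 < b ∧ ∀ E A : Set Ω, MeasurableSet[G b] E → MeasurableSet[H] A →
          A ⊆ D → 0 < P A →
          |(P (E ∩ A)).toReal / (P A).toReal - (P E).toReal| < ε) := by
  constructor
  · intro htend ε hε
    have hpos : (0:ℝ) < ε ^ 2 / 2 := by positivity
    have hev : ∀ᶠ b in Filter.atTop, @betaMix Ω F P (G b) H < ε ^ 2 / 2 :=
      htend.eventually (eventually_lt_nhds hpos)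
    obtain ⟨b0, hb0⟩ := Filter.eventually_atTop.1 hev
    have hb : (0:ℝ) < max b0 1 := lt_of_lt_of_le one_pos (le_max_right _ _)
    have hβ : @betaMix Ω F P (G (max b0 1)) H < ε ^ 2 / 2 := hb0 _ (le_max_left _ _)
    obtain ⟨D, hD, hPD, hcond⟩ := exists_good_D (F := F) P (hG (max b0 1)) hH hε hβ
    exact ⟨D, hD, hPD, max b0 1, hb, hcond⟩
  · intro hcond
    rw [Metric.tendsto_atTop]
    intro δ hδ
    obtain ⟨D, hD, hPD, b, hb, hc⟩ := hcond (δ / 8) (by linarith)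
    refine ⟨max b 1, fun b' hb' => ?_⟩
    have hb'b : b ≤ b' := le_trans (le_max_left _ _) hb'
    have hmono := betaMix_mono (F := F) P (hG b) hH (hanti b b' hb hb'b)
    have hle := betaMix_le_of_forall (F := F) P (4 * (δ / 8))
      (bSet_le_of_cond (F := F) P (hG b) hH (by linarith : (0:ℝ) < δ / 8) D hD hPD hc)
    have hnn := betaMix_nonneg (F := F) P (hG b') hH
    rw [Real.dist_eq, sub_zero, abs_of_nonneg hnn]
    linarith
end
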